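/- Let δ > 0, Ω = ℝ^{N-1} × (0, δ), and 1 < q < ∞. Suppose for each parameter λ in a set Λ and each pair (x_N, y_N) ∈ (0,δ)² an operator K₀(λ; x_N, y_N) on L_q(ℝ^{N-1}) is given, and the family {K₀(λ; x_N, y_N) : λ ∈ Λ, x_N, y_N ∈ (0,δ)} is R-bounded on L(L_q(ℝ^{N-1})) with R-bound M. Define K(λ)h(x', x_N) = ∫_0^δ (K₀(λ; x_N, y_N) h(·, y_N))(x') dy_N for h ∈ L_q(Ω). Then {K(λ) : λ ∈ Λ} is R-bounded on L(L_q(Ω)) with R-bound at most δ·M (up to a constant depending only on q). -/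

import Mathlib

open MeasureTheory
open scoped ENNReal

/-- The sign `±1` attached to a Boolean. -/
def rsign (b : Bool) : ℝ := if b then 1 else -1

/-- R-boundedness of a family of operators with exponent `p` and constant `C`,
the randomized expectation written as a sum over all sign patterns. -/
def IsRBoundedWith {X Y : Type*} [NormedAddCommGroup X] [NormedSpace ℝ X]
    [NormedAddCommGroup Y] [NormedSpace ℝ Y]
    (𝒯 : Set (X →L[ℝ] Y)) (p C : ℝ) : Prop :=
  ∀ (m : ℕ) (T : Fin m → (X →L[ℝ] Y)), (∀ j, T j ∈ 𝒯) →
    ∀ x : Fin m → X,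
      ∑ ε : Fin m → Bool, ‖∑ j, rsign (ε j) • (T j) (x j)‖ ^ p
        ≤ C ^ p * ∑ ε : Fin m → Bool, ‖∑ j, rsign (ε j) • x j‖ ^ p

lemma half_add_rpow {a b p : ℝ} (ha : 0 ≤ a) (hb : 0 ≤ b) (hp : 1 ≤ p) :
    (2⁻¹ * a + 2⁻¹ * b) ^ p ≤ 2⁻¹ * a ^ p + 2⁻¹ * b ^ p := by
  have h := NNReal.rpow_arith_mean_le_arith_mean2_rpow 2⁻¹ 2⁻¹ a.toNNReal b.toNNReal
    (by rw [← NNReal.coe_inj]; push_cast; norm_num) hp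
  have h2 := (NNReal.coe_le_coe).2 h
  push_cast at h2
  rwa [Real.coe_toNNReal a ha, Real.coe_toNNReal b hb] at h2

lemma rsign_not (b : Bool) : rsign (!b) = - rsign b := by cases b <;> simp [rsign]

lemma randomized_subset_le {E : Type*} [NormedAddCommGroup E] [NormedSpace ℝ E]
    {p : ℝ} (hp : 1 ≤ p) {m : ℕ} (J : Finset (Fin m)) (v : Fin m → E) :
    ∑ ε : Fin m → Bool, ‖∑ j ∈ J, rsign (ε j) • v j‖ ^ p
      ≤ ∑ ε : Fin m → Bool, ‖∑ j, rsign (ε j) • v j‖ ^ p := by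
  classical
  set Φ : (Fin m → Bool) → (Fin m → Bool) := fun ε j => if j ∈ J then ε j else !(ε j) with hΦ
  have hΦinv : Function.Involutive Φ := by
    intro ε; funext j; simp only [hΦ]; split <;> simp
  have key : ∀ ε : Fin m → Bool,
      ‖∑ j ∈ J, rsign (ε j) • v j‖ ^ p
        ≤ 2⁻¹ * ‖∑ j, rsign (ε j) • v j‖ ^ p + 2⁻¹ * ‖∑ j, rsign (Φ ε j) • v j‖ ^ p := by
    intro ε
    have hsum : ∑ j ∈ J, rsign (ε j) • v j
        = (2⁻¹ : ℝ) • ((∑ j, rsign (ε j) • v j) + ∑ j, rsign (Φ ε j) • v j) := by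
      rw [← Finset.sum_add_distrib, Finset.smul_sum, ← Finset.univ_inter J,
        ← Finset.sum_ite_mem]
      refine Finset.sum_congr rfl fun j _ => ?_
      by_cases hj : j ∈ J
      · simp only [hj, if_true, hΦ, ← add_smul, smul_smul]
        congr 1; ring
      · simp only [hj, if_false, hΦ, rsign_not, neg_smul]
        rw [add_neg_cancel, smul_zero]
    have h1 : ‖∑ j ∈ J, rsign (ε j) • v j‖
        ≤ 2⁻¹ * ‖∑ j, rsign (ε j) • v j‖ + 2⁻¹ * ‖∑ j, rsign (Φ ε j) • v j‖ := by
      rw [hsum, norm_smul]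
      have : ‖(2⁻¹ : ℝ)‖ = 2⁻¹ := by rw [Real.norm_eq_abs]; norm_num
      rw [this, ← mul_add]
      gcongr
      exact norm_add_le _ _
    calc ‖∑ j ∈ J, rsign (ε j) • v j‖ ^ p
        ≤ (2⁻¹ * ‖∑ j, rsign (ε j) • v j‖ + 2⁻¹ * ‖∑ j, rsign (Φ ε j) • v j‖) ^ p :=
          Real.rpow_le_rpow (norm_nonneg _) h1 (by linarith)
      _ ≤ 2⁻¹ * ‖∑ j, rsign (ε j) • v j‖ ^ p + 2⁻¹ * ‖∑ j, rsign (Φ ε j) • v j‖ ^ p :=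
          half_add_rpow (norm_nonneg _) (norm_nonneg _) hp
  calc ∑ ε : Fin m → Bool, ‖∑ j ∈ J, rsign (ε j) • v j‖ ^ p
      ≤ ∑ ε : Fin m → Bool, (2⁻¹ * ‖∑ j, rsign (ε j) • v j‖ ^ p
          + 2⁻¹ * ‖∑ j, rsign (Φ ε j) • v j‖ ^ p) :=
        Finset.sum_le_sum fun ε _ => key ε
    _ = 2⁻¹ * (∑ ε : Fin m → Bool, ‖∑ j, rsign (ε j) • v j‖ ^ p)
          + 2⁻¹ * ∑ ε : Fin m → Bool, ‖∑ j, rsign (Φ ε j) • v j‖ ^ p := by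
        rw [Finset.sum_add_distrib, ← Finset.mul_sum, ← Finset.mul_sum]
    _ = ∑ ε : Fin m → Bool, ‖∑ j, rsign (ε j) • v j‖ ^ p := by
        have : ∑ ε : Fin m → Bool, ‖∑ j, rsign (Φ ε j) • v j‖ ^ p
            = ∑ ε : Fin m → Bool, ‖∑ j, rsign (ε j) • v j‖ ^ p :=
          Fintype.sum_bijective Φ hΦinv.bijective _ _ (fun ε => rfl)
        rw [this]; ring

lemma lintegral_pow_le_measure_univ_mul {α : Type*} [MeasurableSpace α] (μ : Measure α)
    {p : ℝ} (hp : 1 < p) {f : α → ℝ≥0∞} (hf : AEMeasurable f μ) :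
    (∫⁻ y, f y ∂μ) ^ p ≤ μ Set.univ ^ (p - 1) * ∫⁻ y, f y ^ p ∂μ := by
  have hp0 : (0:ℝ) < p := lt_trans one_pos hp
  have hpq : p.HolderConjugate (p / (p - 1)) := by
    have := Real.HolderConjugate.conjExponent hp
    rwa [Real.conjExponent] at this
  have h := ENNReal.lintegral_mul_le_Lp_mul_Lq μ hpq hf
    (aemeasurable_const : AEMeasurable (fun _ => (1:ℝ≥0∞)) μ)
  simp only [Pi.mul_apply, mul_one, ENNReal.one_rpow, lintegral_one] at h
  have h2 := ENNReal.rpow_le_rpow h hp0.le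
  rw [ENNReal.mul_rpow_of_nonneg _ _ hp0.le, ← ENNReal.rpow_mul, ← ENNReal.rpow_mul] at h2
  have e1 : (1/p) * p = 1 := by field_simp
  have e2 : (1/(p/(p-1))) * p = p - 1 := by
    rw [one_div_div]
    field_simp
  rw [e1, e2, ENNReal.rpow_one] at h2
  calc (∫⁻ y, f y ∂μ) ^ p ≤ (∫⁻ a, f a ^ p ∂μ) * μ Set.univ ^ (p-1) := h2
    _ = μ Set.univ ^ (p - 1) * ∫⁻ y, f y ^ p ∂μ := mul_comm _ _

lemma Lp.coeFn_finset_sum {α E : Type*} {m0 : MeasurableSpace α} {μ : Measure α}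
    [NormedAddCommGroup E] {p : ℝ≥0∞} {ι : Type*} (s : Finset ι) (f : ι → Lp E p μ) :
    (↑(∑ i ∈ s, f i) : α → E) =ᵐ[μ] fun a => ∑ i ∈ s, (f i : α → E) a := by
  classical
  induction s using Finset.induction_on with
  | empty =>
    simp only [Finset.sum_empty]
    filter_upwards [Lp.coeFn_zero E p μ] with x hx using hx
  | @insert a s ha ih =>
    rw [Finset.sum_insert ha]
    filter_upwards [Lp.coeFn_add (f a) (∑ i ∈ s, f i), ih] with x h1 h2
    rw [Finset.sum_insert ha, h1, Pi.add_apply, h2]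

lemma sum_ennnorm_rpow {ι E : Type*} [Fintype ι] [NormedAddCommGroup E] {p : ℝ} (hp : 0 ≤ p)
    (g : ι → E) :
    ∑ i, (‖g i‖₊ : ℝ≥0∞) ^ p = ENNReal.ofReal (∑ i, ‖g i‖ ^ p) := by
  rw [ENNReal.ofReal_sum_of_nonneg (fun i _ => Real.rpow_nonneg (norm_nonneg _) p)]
  refine Finset.sum_congr rfl fun i _ => ?_
  rw [← enorm_eq_nnnorm, ← ofReal_norm, ← ENNReal.ofReal_rpow_of_nonneg (norm_nonneg _) hp]

/-- Integration of an R-bounded fiber family over the finite normal interval `(0,δ)`.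
Identifying `L_q(Ω)`, `Ω = ℝ^{N-1} × (0,δ)`, with the vector-valued space
`L_q((0,δ); E)` where `E = L_q(ℝ^{N-1})`, suppose the fiber operators
`K₀(λ; x_N, y_N) ∈ L(E)` form an R-bounded family with R-bound `M`, and suppose
`K(λ) ∈ L(L_q((0,δ); E))` satisfies
`(K(λ)h)(x_N) = ∫_0^δ K₀(λ; x_N, y_N)(h(y_N)) dy_N` a.e.
Then `{K(λ)}` is R-bounded with R-bound at most `C_q · δ · M`, with `C_q` depending
only on `q`. -/
theorem isRBounded_of_fiberwise_kernel (q : ℝ≥0∞) [Fact (1 ≤ q)] (hq : 1 < q) (hq' : q ≠ ⊤) :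
    ∃ Cq : ℝ, 0 < Cq ∧
      ∀ (δ : ℝ), 0 < δ →
      ∀ (E : Type) [NormedAddCommGroup E] [NormedSpace ℝ E] [CompleteSpace E]
        (Λ : Type) (K₀ : Λ → ℝ → ℝ → (E →L[ℝ] E)) (M : ℝ), 0 ≤ M →
        IsRBoundedWith {T | ∃ (l : Λ) (x y : ℝ), x ∈ Set.Ioo 0 δ ∧ y ∈ Set.Ioo 0 δ ∧
            T = K₀ l x y} q.toReal M →
        ∀ K : Λ → (Lp E q (volume.restrict (Set.Ioo (0:ℝ) δ)) →L[ℝ]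
                    Lp E q (volume.restrict (Set.Ioo (0:ℝ) δ))),
          (∀ (l : Λ) (h : Lp E q (volume.restrict (Set.Ioo (0:ℝ) δ))),
            ∀ᵐ x ∂(volume.restrict (Set.Ioo (0:ℝ) δ)),
              (K l h) x = ∫ y in Set.Ioo (0:ℝ) δ, K₀ l x y (h y)) →
          IsRBoundedWith {T | ∃ l : Λ, T = K l} q.toReal (Cq * δ * M) := by
  classical
  refine ⟨1, one_pos, ?_⟩
  intro δ hδ E _ _ _ Λ K₀ M hM hRB K hK
  set μ : Measure ℝ := volume.restrict (Set.Ioo (0:ℝ) δ) with hμ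
  set p : ℝ := q.toReal with hpdef
  have hq0 : q ≠ 0 := by
    intro hc; rw [hc] at hq; exact (not_lt.2 (zero_le_one : (0:ℝ≥0∞) ≤ 1)) hq
  have hp1 : 1 < p := by
    rw [hpdef, ← ENNReal.toReal_one]
    exact ENNReal.toReal_strict_mono hq' hq
  have hp0 : (0:ℝ) < p := lt_trans one_pos hp1
  intro m T hT h
  choose l hl using hT
  set G : (Fin m → Bool) → Lp E q μ := fun ε => ∑ j, rsign (ε j) • T j (h j) with hGdef
  set H : (Fin m → Bool) → Lp E q μ := fun ε => ∑ j, rsign (ε j) • h j with hHdef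
  -- norm identities
  have norm_rpow : ∀ f : Lp E q μ,
      ‖f‖ ^ p = (∫⁻ x, (‖f x‖₊ : ℝ≥0∞) ^ p ∂μ).toReal := by
    intro f
    rw [Lp.norm_def, eLpNorm_eq_lintegral_rpow_enorm_toReal hq0 hq', ENNReal.toReal_rpow,
      ← ENNReal.rpow_mul, one_div, inv_mul_cancel₀ hp0.ne', ENNReal.rpow_one]
    rfl
  have lint_ne_top : ∀ f : Lp E q μ, (∫⁻ x, (‖f x‖₊ : ℝ≥0∞) ^ p ∂μ) ≠ ⊤ := by
    intro f
    have h1 := Lp.eLpNorm_ne_top f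
    rw [eLpNorm_eq_lintegral_rpow_enorm_toReal hq0 hq'] at h1
    intro hcon
    rw [show (∫⁻ x, ‖f x‖ₑ ^ q.toReal ∂μ) = ⊤ from hcon, ENNReal.top_rpow_of_pos (by positivity : (0:ℝ) < 1/p)] at h1
    exact h1 rfl
  have meas : ∀ f : Lp E q μ, AEMeasurable (fun x => (‖f x‖₊ : ℝ≥0∞) ^ p) μ :=
    fun f => (Lp.aestronglyMeasurable f).enorm.pow_const p
  -- a.e. representations
  have hGrep : ∀ᵐ x ∂μ, ∀ ε : Fin m → Bool,
      (G ε : ℝ → E) x = ∑ j, rsign (ε j) • ((T j (h j) : ℝ → E) x) := by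
    rw [ae_all_iff]
    intro ε
    filter_upwards [Lp.coeFn_finset_sum Finset.univ (fun j => rsign (ε j) • T j (h j)),
      ae_all_iff.2 fun j => Lp.coeFn_smul (rsign (ε j)) (T j (h j))] with x h1 h2
    rw [hGdef]
    simp only
    rw [h1]
    exact Finset.sum_congr rfl fun j _ => h2 j
  have hHrep : ∀ᵐ y ∂μ, ∀ ε : Fin m → Bool,
      (H ε : ℝ → E) y = ∑ j, rsign (ε j) • ((h j : ℝ → E) y) := by
    rw [ae_all_iff]
    intro ε
    filter_upwards [Lp.coeFn_finset_sum Finset.univ (fun j => rsign (ε j) • h j),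
      ae_all_iff.2 fun j => Lp.coeFn_smul (rsign (ε j)) (h j)] with y h1 h2
    rw [hHdef]
    simp only
    rw [h1]
    exact Finset.sum_congr rfl fun j _ => h2 j
  have hTrep : ∀ᵐ x ∂μ, ∀ j,
      (T j (h j) : ℝ → E) x = ∫ y, K₀ (l j) x y ((h j : ℝ → E) y) ∂μ := by
    rw [ae_all_iff]
    intro j
    have h1 := hK (l j) (h j)
    rw [← hl j] at h1
    exact h1
  have hmem : ∀ᵐ x ∂μ, x ∈ Set.Ioo (0:ℝ) δ := by
    rw [hμ]; exact ae_restrict_mem measurableSet_Ioo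
  have hμuniv : μ Set.univ = ENNReal.ofReal δ := by
    rw [hμ, Measure.restrict_apply_univ, Real.volume_Ioo, sub_zero]
  set W : ℝ≥0∞ := ∫⁻ y, ∑ ε : Fin m → Bool, (‖(H ε : ℝ → E) y‖₊ : ℝ≥0∞) ^ p ∂μ with hWdef
  have hW : W = ∑ ε : Fin m → Bool, ∫⁻ y, (‖(H ε : ℝ → E) y‖₊ : ℝ≥0∞) ^ p ∂μ :=
    lintegral_finset_sum' _ fun ε _ => meas (H ε)
  -- main pointwise claim
  have claim : ∀ᵐ x ∂μ, ∑ ε : Fin m → Bool, (‖(G ε : ℝ → E) x‖₊ : ℝ≥0∞) ^ p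
      ≤ ENNReal.ofReal δ ^ (p - 1) * (ENNReal.ofReal M ^ p * W) := by
    filter_upwards [hmem, hGrep, hTrep] with x hx hGx hTx
    set J : Finset (Fin m) := Finset.univ.filter
        (fun j => Integrable (fun y => K₀ (l j) x y ((h j : ℝ → E) y)) μ) with hJ
    have hJint : ∀ j ∈ J, Integrable (fun y => K₀ (l j) x y ((h j : ℝ → E) y)) μ :=
      fun j hj => (Finset.mem_filter.1 hj).2
    set F : (Fin m → Bool) → ℝ → E :=
        fun ε y => ∑ j ∈ J, rsign (ε j) • K₀ (l j) x y ((h j : ℝ → E) y) with hF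
    have hFint : ∀ ε, Integrable (F ε) μ := by
      intro ε
      exact integrable_finset_sum _ fun j hj => (hJint j hj).smul (rsign (ε j))
    have hGx' : ∀ ε : Fin m → Bool, (G ε : ℝ → E) x = ∫ y, F ε y ∂μ := by
      intro ε
      rw [hGx ε]
      calc ∑ j, rsign (ε j) • ((T j (h j) : ℝ → E) x)
          = ∑ j ∈ J, rsign (ε j) • ∫ y, K₀ (l j) x y ((h j : ℝ → E) y) ∂μ := by
            rw [Finset.sum_congr rfl fun j _ => by rw [hTx j]]
            symm
            apply Finset.sum_subset (Finset.subset_univ J)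
            intro j _ hj
            rw [integral_undef, smul_zero]
            simpa [hJ] using hj
        _ = ∑ j ∈ J, ∫ y, rsign (ε j) • K₀ (l j) x y ((h j : ℝ → E) y) ∂μ := by
            refine Finset.sum_congr rfl fun j hj => ?_
            rw [integral_smul]
        _ = ∫ y, F ε y ∂μ :=
            (integral_finset_sum J fun j hj => (hJint j hj).smul (rsign (ε j))).symm
    have step1 : ∀ ε : Fin m → Bool, (‖(G ε : ℝ → E) x‖₊ : ℝ≥0∞) ^ p
        ≤ ENNReal.ofReal δ ^ (p - 1) * ∫⁻ y, (‖F ε y‖₊ : ℝ≥0∞) ^ p ∂μ := by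
      intro ε
      have h1 : (‖(G ε : ℝ → E) x‖₊ : ℝ≥0∞) ≤ ∫⁻ y, (‖F ε y‖₊ : ℝ≥0∞) ∂μ := by
        rw [hGx' ε]
        exact enorm_integral_le_lintegral_enorm _
      have h2 := lintegral_pow_le_measure_univ_mul μ hp1
        ((hFint ε).aestronglyMeasurable.enorm)
      calc (‖(G ε : ℝ → E) x‖₊ : ℝ≥0∞) ^ p
          ≤ (∫⁻ y, (‖F ε y‖₊ : ℝ≥0∞) ∂μ) ^ p := ENNReal.rpow_le_rpow h1 hp0.le
        _ ≤ μ Set.univ ^ (p - 1) * ∫⁻ y, (‖F ε y‖₊ : ℝ≥0∞) ^ p ∂μ := h2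
        _ = ENNReal.ofReal δ ^ (p - 1) * ∫⁻ y, (‖F ε y‖₊ : ℝ≥0∞) ^ p ∂μ := by rw [hμuniv]
    have yclaim : ∀ᵐ y ∂μ, ∑ ε : Fin m → Bool, (‖F ε y‖₊ : ℝ≥0∞) ^ p
        ≤ ENNReal.ofReal M ^ p * ∑ ε : Fin m → Bool, (‖(H ε : ℝ → E) y‖₊ : ℝ≥0∞) ^ p := by
      filter_upwards [hmem, hHrep] with y hy hHy
      have hreal := hRB m (fun j => K₀ (l j) x y) (fun j => ⟨l j, x, y, hx, hy, rfl⟩)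
        (fun j => if j ∈ J then (h j : ℝ → E) y else 0)
      have hL : ∀ ε : Fin m → Bool,
          ∑ j, rsign (ε j) • (K₀ (l j) x y) (if j ∈ J then (h j : ℝ → E) y else 0)
            = F ε y := by
        intro ε
        rw [hF]
        simp only
        calc ∑ j, rsign (ε j) • (K₀ (l j) x y) (if j ∈ J then (h j : ℝ → E) y else 0)
            = ∑ j, (if j ∈ J then rsign (ε j) • K₀ (l j) x y ((h j : ℝ → E) y) else 0) := by
              refine Finset.sum_congr rfl fun j _ => ?_
              by_cases hj : j ∈ J <;> simp [hj]
          _ = ∑ j ∈ Finset.univ ∩ J, rsign (ε j) • K₀ (l j) x y ((h j : ℝ → E) y) :=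
              Finset.sum_ite_mem _ _ _
          _ = ∑ j ∈ J, rsign (ε j) • K₀ (l j) x y ((h j : ℝ → E) y) := by
              rw [Finset.univ_inter]
      have hR : ∀ ε : Fin m → Bool,
          ∑ j, rsign (ε j) • (if j ∈ J then (h j : ℝ → E) y else 0)
            = ∑ j ∈ J, rsign (ε j) • (h j : ℝ → E) y := by
        intro ε
        calc ∑ j, rsign (ε j) • (if j ∈ J then (h j : ℝ → E) y else 0)
            = ∑ j, (if j ∈ J then rsign (ε j) • (h j : ℝ → E) y else 0) := by
              refine Finset.sum_congr rfl fun j _ => ?_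
              by_cases hj : j ∈ J <;> simp [hj]
          _ = ∑ j ∈ Finset.univ ∩ J, rsign (ε j) • (h j : ℝ → E) y :=
              Finset.sum_ite_mem _ _ _
          _ = ∑ j ∈ J, rsign (ε j) • (h j : ℝ → E) y := by rw [Finset.univ_inter]
      simp only [hL, hR] at hreal
      have hcon := randomized_subset_le hp1.le J (fun j => (h j : ℝ → E) y)
      have hreal2 : ∑ ε : Fin m → Bool, ‖F ε y‖ ^ p
          ≤ M ^ p * ∑ ε : Fin m → Bool, ‖∑ j, rsign (ε j) • (h j : ℝ → E) y‖ ^ p :=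
        hreal.trans (mul_le_mul_of_nonneg_left hcon (Real.rpow_nonneg hM p))
      calc ∑ ε : Fin m → Bool, (‖F ε y‖₊ : ℝ≥0∞) ^ p
          = ENNReal.ofReal (∑ ε : Fin m → Bool, ‖F ε y‖ ^ p) := sum_ennnorm_rpow hp0.le _
        _ ≤ ENNReal.ofReal (M ^ p * ∑ ε : Fin m → Bool,
              ‖∑ j, rsign (ε j) • (h j : ℝ → E) y‖ ^ p) := ENNReal.ofReal_le_ofReal hreal2
        _ = ENNReal.ofReal (M ^ p) * ENNReal.ofReal (∑ ε : Fin m → Bool,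
              ‖∑ j, rsign (ε j) • (h j : ℝ → E) y‖ ^ p) :=
            ENNReal.ofReal_mul (Real.rpow_nonneg hM p)
        _ = ENNReal.ofReal M ^ p * ∑ ε : Fin m → Bool, (‖(H ε : ℝ → E) y‖₊ : ℝ≥0∞) ^ p := by
            rw [← ENNReal.ofReal_rpow_of_nonneg hM hp0.le, ← sum_ennnorm_rpow hp0.le]
            congr 1
            exact Finset.sum_congr rfl fun ε _ => by rw [hHy ε]
    calc ∑ ε : Fin m → Bool, (‖(G ε : ℝ → E) x‖₊ : ℝ≥0∞) ^ p
        ≤ ∑ ε : Fin m → Bool,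
            (ENNReal.ofReal δ ^ (p - 1) * ∫⁻ y, (‖F ε y‖₊ : ℝ≥0∞) ^ p ∂μ) :=
          Finset.sum_le_sum fun ε _ => step1 ε
      _ = ENNReal.ofReal δ ^ (p - 1)
            * ∑ ε : Fin m → Bool, ∫⁻ y, (‖F ε y‖₊ : ℝ≥0∞) ^ p ∂μ := by
          rw [← Finset.mul_sum]
      _ = ENNReal.ofReal δ ^ (p - 1)
            * ∫⁻ y, ∑ ε : Fin m → Bool, (‖F ε y‖₊ : ℝ≥0∞) ^ p ∂μ := by
          congr 1
          exact (lintegral_finset_sum' _ fun ε _ =>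
            ((hFint ε).aestronglyMeasurable.enorm.pow_const p)).symm
      _ ≤ ENNReal.ofReal δ ^ (p - 1) * (ENNReal.ofReal M ^ p * W) := by
          refine mul_le_mul_right ?_ _
          calc ∫⁻ y, ∑ ε : Fin m → Bool, (‖F ε y‖₊ : ℝ≥0∞) ^ p ∂μ
              ≤ ∫⁻ y, ENNReal.ofReal M ^ p
                  * ∑ ε : Fin m → Bool, (‖(H ε : ℝ → E) y‖₊ : ℝ≥0∞) ^ p ∂μ :=
                lintegral_mono_ae yclaim
            _ = ENNReal.ofReal M ^ p * W :=
                lintegral_const_mul' _ _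
                  (ENNReal.rpow_ne_top_of_nonneg hp0.le ENNReal.ofReal_ne_top)
  -- assemble
  have hδ0 : ENNReal.ofReal δ ≠ 0 := (ENNReal.ofReal_pos.2 hδ).ne'
  have hδe : ENNReal.ofReal δ ^ (p - 1) * ENNReal.ofReal δ = ENNReal.ofReal δ ^ p := by
    nth_rewrite 2 [← ENNReal.rpow_one (ENNReal.ofReal δ)]
    rw [← ENNReal.rpow_add _ _ hδ0 ENNReal.ofReal_ne_top, sub_add_cancel]
  have key : ∑ ε : Fin m → Bool, ∫⁻ x, (‖(G ε : ℝ → E) x‖₊ : ℝ≥0∞) ^ p ∂μ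
      ≤ ENNReal.ofReal δ ^ p * ENNReal.ofReal M ^ p
        * ∑ ε : Fin m → Bool, ∫⁻ y, (‖(H ε : ℝ → E) y‖₊ : ℝ≥0∞) ^ p ∂μ := by
    calc ∑ ε : Fin m → Bool, ∫⁻ x, (‖(G ε : ℝ → E) x‖₊ : ℝ≥0∞) ^ p ∂μ
        = ∫⁻ x, ∑ ε : Fin m → Bool, (‖(G ε : ℝ → E) x‖₊ : ℝ≥0∞) ^ p ∂μ :=
          (lintegral_finset_sum' _ fun ε _ => meas (G ε)).symm
      _ ≤ ∫⁻ _, ENNReal.ofReal δ ^ (p - 1) * (ENNReal.ofReal M ^ p * W) ∂μ :=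
          lintegral_mono_ae claim
      _ = ENNReal.ofReal δ ^ (p - 1) * (ENNReal.ofReal M ^ p * W) * μ Set.univ :=
          lintegral_const _
      _ = ENNReal.ofReal δ ^ p * ENNReal.ofReal M ^ p * W := by
          rw [hμuniv, ← hδe]; ring
      _ = ENNReal.ofReal δ ^ p * ENNReal.ofReal M ^ p
            * ∑ ε : Fin m → Bool, ∫⁻ y, (‖(H ε : ℝ → E) y‖₊ : ℝ≥0∞) ^ p ∂μ := by
          rw [hW]
  have hRHSne : ENNReal.ofReal δ ^ p * ENNReal.ofReal M ^ p
      * (∑ ε : Fin m → Bool, ∫⁻ y, (‖(H ε : ℝ → E) y‖₊ : ℝ≥0∞) ^ p ∂μ) ≠ ⊤ := by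
    apply ENNReal.mul_ne_top
    · exact ENNReal.mul_ne_top
        (ENNReal.rpow_ne_top_of_nonneg hp0.le ENNReal.ofReal_ne_top)
        (ENNReal.rpow_ne_top_of_nonneg hp0.le ENNReal.ofReal_ne_top)
    · exact (ENNReal.sum_lt_top.2 fun ε _ => (lint_ne_top (H ε)).lt_top).ne
  show ∑ ε : Fin m → Bool, ‖G ε‖ ^ p ≤ (1 * δ * M) ^ p * ∑ ε : Fin m → Bool, ‖H ε‖ ^ p
  calc ∑ ε : Fin m → Bool, ‖G ε‖ ^ p
      = (∑ ε : Fin m → Bool, ∫⁻ x, (‖(G ε : ℝ → E) x‖₊ : ℝ≥0∞) ^ p ∂μ).toReal := by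
        rw [ENNReal.toReal_sum fun ε _ => lint_ne_top (G ε)]
        exact Finset.sum_congr rfl fun ε _ => norm_rpow (G ε)
    _ ≤ (ENNReal.ofReal δ ^ p * ENNReal.ofReal M ^ p
          * ∑ ε : Fin m → Bool, ∫⁻ y, (‖(H ε : ℝ → E) y‖₊ : ℝ≥0∞) ^ p ∂μ).toReal :=
        ENNReal.toReal_mono hRHSne key
    _ = (1 * δ * M) ^ p * ∑ ε : Fin m → Bool, ‖H ε‖ ^ p := by
        rw [ENNReal.toReal_mul, ENNReal.toReal_mul, ← ENNReal.toReal_rpow,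
          ← ENNReal.toReal_rpow, ENNReal.toReal_ofReal hδ.le, ENNReal.toReal_ofReal hM,
          ENNReal.toReal_sum fun ε _ => lint_ne_top (H ε), one_mul,
          Real.mul_rpow hδ.le hM, mul_assoc]
        rw [← mul_assoc]
        congr 1
        exact Finset.sum_congr rfl fun ε _ => (norm_rpow (H ε)).symm
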